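/- Core identity of Theorem 2 (equilibrium direct problem): define the uncertain cable forces f₁ = m_L·g·e₃ − (m̂·b̂₁·g/L̂)·e₃ + t·ū and f₂ = (m̂·b̂₁·g/L̂)·e₃ − t·ū, and set ξ = b₁·m_L − b̂₁·m̂·L/L̂. Then (i) f₁ + f₂ = m_L·g·e₃ (translational load balance holds exactly despite the uncertainties), and (ii) for every w ∈ ℝ³ (the actual beam axis R·e₁), b₁·(w × f₁) − b₂·(w × f₂) = w × (ξ·g·e₃ + L·t·ū). Consequently the rotational load balance b₁·(w × f₁) − b₂·(w × f₂) = 0 holds if and only if w × (ξ·g·e₃ + L·t·ū) = 0 (condition (13)). -/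

import Mathlib

/-- Cross product on `EuclideanSpace ℝ (Fin 3)`. -/
noncomputable def cross3 (a b : EuclideanSpace ℝ (Fin 3)) : EuclideanSpace ℝ (Fin 3) :=
  WithLp.toLp 2 (![a 1 * b 2 - a 2 * b 1, a 2 * b 0 - a 0 * b 2, a 0 * b 1 - a 1 * b 0] : Fin 3 → ℝ)

/-- The vertical unit vector `e₃`. -/
noncomputable def e3 : EuclideanSpace ℝ (Fin 3) := WithLp.toLp 2 (![0, 0, 1] : Fin 3 → ℝ)

/-- core identity of Theorem 2, equilibrium direct problem: with the uncertain
cable forces `f₁, f₂` and `ξ = b₁ m_L − b̂₁ m̂ L / L̂`, translational balance holds exactly,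
the residual torque is `w × (ξ g e₃ + L t ū)`, and rotational balance holds iff
`w × (ξ g e₃ + L t ū) = 0` (condition (13)). -/
theorem equilibrium_direct_problem_core
    (mL g b₁ b₂ L : ℝ) (hm : 0 < mL) (hg : 0 < g) (hb₁ : 0 < b₁) (hb₂ : 0 < b₂)
    (hL : L = b₁ + b₂)
    (mhat b₁hat Lhat : ℝ) (hLhat : 0 < Lhat)
    (t : ℝ) (ubar : EuclideanSpace ℝ (Fin 3)) (hubar : ‖ubar‖ = 1)
    (f₁ f₂ : EuclideanSpace ℝ (Fin 3)) (ξ : ℝ)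
    (hf₁ : f₁ = (mL * g) • e3 - (mhat * b₁hat * g / Lhat) • e3 + t • ubar)
    (hf₂ : f₂ = (mhat * b₁hat * g / Lhat) • e3 - t • ubar)
    (hξ : ξ = b₁ * mL - b₁hat * mhat * L / Lhat) :
    f₁ + f₂ = (mL * g) • e3 ∧
    (∀ w : EuclideanSpace ℝ (Fin 3),
      b₁ • cross3 w f₁ - b₂ • cross3 w f₂ =
        cross3 w ((ξ * g) • e3 + (L * t) • ubar)) ∧
    (∀ w : EuclideanSpace ℝ (Fin 3),
      (b₁ • cross3 w f₁ - b₂ • cross3 w f₂ = 0 ↔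
        cross3 w ((ξ * g) • e3 + (L * t) • ubar) = 0)) := by

  have key : ∀ w : EuclideanSpace ℝ (Fin 3),
      b₁ • cross3 w f₁ - b₂ • cross3 w f₂ =
        cross3 w ((ξ * g) • e3 + (L * t) • ubar) := by
    intro w
    ext i
    have hL' : Lhat ≠ 0 := ne_of_gt hLhat
    fin_cases i <;>
      simp [cross3, e3, hf₁, hf₂, hξ, hL, PiLp.smul_apply, PiLp.add_apply,
        PiLp.sub_apply, smul_eq_mul] <;>
      (first | ring | (field_simp; ring))
  refine ⟨?_, key, fun w => by rw [key w]⟩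
  ext i
  fin_cases i <;>
    simp [hf₁, hf₂, e3, PiLp.smul_apply, PiLp.add_apply, PiLp.sub_apply, smul_eq_mul] <;>
    ring
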